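/- Let A be an m×n real matrix. Suppose for every r ∈ [min(m,n)] and every contiguous r×r submatrix A_r of A, the single vector x^{A_r} := (A_r¹¹, −A_r¹², ..., (−1)^{r−1}A_r^{1r})ᵀ satisfies: S⁺(A_r x^{A_r}) ≤ S⁻(x^{A_r}), and if equality holds then the first component of A_r x^{A_r} (or, if zero, the sign assigned to it in computing S⁺) has the same sign as the first nonzero component of x^{A_r}. Then A is totally positive. -/

import Mathlib

open Matrix

/-- `S⁻(x)`: the number of sign changes of `x` after deleting its zero entries. -/
noncomputable def Sminus {n : ℕ} (x : Fin n → ℝ) : ℕ :=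
  sSup {m | ∃ f : Fin (m + 1) → Fin n, StrictMono f ∧
    ∀ i : Fin m, x (f i.castSucc) * x (f i.succ) < 0}

open Classical in
/-- `S⁺(x)`: the maximal number of sign changes obtainable by replacing the zero entries of
`x` by nonzero values, with the convention `S⁺(0) = n`. -/
noncomputable def Splus {n : ℕ} (x : Fin n → ℝ) : ℕ :=
  if x = 0 then n
  else sSup {m | ∃ y : Fin n → ℝ, (∀ i, y i ≠ 0) ∧ (∀ i, x i ≠ 0 → y i = x i) ∧ m = Sminus y}

/-- The contiguous `(s+1)×(s+1)` submatrix of `A` with rows `a,…,a+s` and columns `b,…,b+s`. -/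
def contSub {m n : ℕ} (A : Matrix (Fin m) (Fin n) ℝ) (a b s : ℕ)
    (ha : a + (s + 1) ≤ m) (hb : b + (s + 1) ≤ n) :
    Matrix (Fin (s + 1)) (Fin (s + 1)) ℝ :=
  fun i j => A ⟨a + i, by have := i.isLt; omega⟩ ⟨b + j, by have := j.isLt; omega⟩

/-- The vector `(B¹¹, -B¹², …, (-1)^s B^{1,s+1})` of signed first-row minors of `B`. -/
noncomputable def signAltMinorVec {s : ℕ} (B : Matrix (Fin (s + 1)) (Fin (s + 1)) ℝ) :
    Fin (s + 1) → ℝ :=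
  fun j => (-1 : ℝ) ^ (j : ℕ) * (B.submatrix Fin.succ j.succAbove).det

lemma sminus_le {s : ℕ} (x : Fin (s + 1) → ℝ) : Sminus x ≤ s := by
  apply csSup_le'
  rintro m ⟨f, hf, -⟩
  have := Fintype.card_le_of_injective f hf.injective
  simpa using this

lemma sminus_alt {s : ℕ} (x : Fin (s + 1) → ℝ)
    (hx : ∀ i : Fin s, x i.castSucc * x i.succ < 0) : Sminus x = s := by
  refine le_antisymm (sminus_le x) (le_csSup ?_ ?_)
  · refine ⟨s, ?_⟩
    rintro m ⟨f, hf, -⟩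
    have := Fintype.card_le_of_injective f hf.injective
    simpa using this
  · exact ⟨id, strictMono_id, hx⟩

lemma neg_one_sq_pow (k : ℕ) : ((-1 : ℝ)) ^ k * (-1) ^ k = 1 := by
  rw [← pow_add]
  exact Even.neg_one_pow ⟨k, by ring⟩

lemma splus_e0 {s : ℕ} {d : ℝ} (hd : d ≠ 0) :
    Splus (fun i : Fin (s + 1) => if i = 0 then d else 0) = s := by
  classical
  have hne : (fun i : Fin (s + 1) => if i = 0 then d else 0) ≠ 0 := by
    intro h
    have := congrFun h 0
    simp [hd] at this
  rw [Splus, if_neg hne]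
  set y : Fin (s + 1) → ℝ := fun i => (-1 : ℝ) ^ (i : ℕ) * d with hy
  have hyne : ∀ i, y i ≠ 0 := by
    intro i
    simp only [hy]
    intro h
    rcases mul_eq_zero.mp h with h' | h'
    · exact pow_ne_zero _ (by norm_num) h'
    · exact hd h'
  have hyalt : ∀ i : Fin s, y i.castSucc * y i.succ < 0 := by
    intro i
    simp only [hy, Fin.coe_castSucc, Fin.val_succ]
    have h1 : ((-1 : ℝ)) ^ ((i : ℕ) + 1) = (-1) ^ (i : ℕ) * (-1) := pow_succ _ _
    rw [h1]
    have h2 := neg_one_sq_pow (i : ℕ)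
    have h3 : (0 : ℝ) < d * d := mul_self_pos.mpr hd
    nlinarith
  have hSy : Sminus y = s := sminus_alt y hyalt
  have hub : ∀ m ∈ {m | ∃ y' : Fin (s + 1) → ℝ, (∀ i, y' i ≠ 0) ∧
      (∀ i, (fun i : Fin (s + 1) => if i = 0 then d else 0) i ≠ 0 → y' i = if i = 0 then d else 0)
      ∧ m = Sminus y'}, m ≤ s := by
    rintro m ⟨y', -, -, rfl⟩
    exact sminus_le y'
  refine le_antisymm (csSup_le' hub) (le_csSup ⟨s, hub⟩ ?_)
  refine ⟨y, hyne, ?_, hSy.symm⟩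
  intro i hi
  have hi0 : i = 0 := by
    by_contra h
    simp [h] at hi
  subst hi0
  simp [hy]

lemma mulVec_signAltMinorVec {s : ℕ} (B : Matrix (Fin (s + 1)) (Fin (s + 1)) ℝ) :
    B.mulVec (signAltMinorVec B) = fun i => if i = 0 then B.det else 0 := by
  funext i
  rcases eq_or_ne i 0 with rfl | hi
  · simp only [if_pos rfl, Matrix.mulVec, dotProduct, signAltMinorVec]
    rw [Matrix.det_succ_row_zero]
    exact Finset.sum_congr rfl fun j _ => by ring
  · simp only [if_neg hi, Matrix.mulVec, dotProduct, signAltMinorVec]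
    have hC : (B.updateRow 0 (B i)).det = 0 := Matrix.det_updateRow_eq_zero hi
    rw [Matrix.det_succ_row_zero] at hC
    have hsub : ∀ j : Fin (s + 1),
        ((B.updateRow 0 (B i)).submatrix Fin.succ j.succAbove) = B.submatrix Fin.succ j.succAbove := by
      intro j
      ext k l
      simp [Matrix.submatrix_apply, Matrix.updateRow_apply, Fin.succ_ne_zero]
    have : ∑ j : Fin (s + 1), (-1 : ℝ) ^ (j : ℕ) * B i j * (B.submatrix Fin.succ j.succAbove).det = 0 := by
      rw [← hC]
      refine Finset.sum_congr rfl fun j _ => ?_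
      rw [hsub j]
      simp [Matrix.updateRow_apply]
    rw [← this]
    exact Finset.sum_congr rfl fun j _ => by ring


lemma solid_pos {m n : ℕ} (A : Matrix (Fin m) (Fin n) ℝ)
    (h : ∀ (s a b : ℕ) (ha : a + (s + 1) ≤ m) (hb : b + (s + 1) ≤ n),
      Splus ((contSub A a b s ha hb).mulVec (signAltMinorVec (contSub A a b s ha hb)))
        ≤ Sminus (signAltMinorVec (contSub A a b s ha hb))
      ∧ (Splus ((contSub A a b s ha hb).mulVec (signAltMinorVec (contSub A a b s ha hb)))
            = Sminus (signAltMinorVec (contSub A a b s ha hb)) →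
          ∃ y : Fin (s + 1) → ℝ,
            (∀ i, y i ≠ 0)
            ∧ (∀ i, (contSub A a b s ha hb).mulVec
                (signAltMinorVec (contSub A a b s ha hb)) i ≠ 0 →
                y i = (contSub A a b s ha hb).mulVec
                  (signAltMinorVec (contSub A a b s ha hb)) i)
            ∧ Sminus y = Splus ((contSub A a b s ha hb).mulVec
                (signAltMinorVec (contSub A a b s ha hb)))
            ∧ ∃ i0 : Fin (s + 1), signAltMinorVec (contSub A a b s ha hb) i0 ≠ 0
                ∧ (∀ j, j < i0 → signAltMinorVec (contSub A a b s ha hb) j = 0)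
                ∧ 0 < y 0 * signAltMinorVec (contSub A a b s ha hb) i0)) :
    ∀ (s a b : ℕ) (ha : a + (s + 1) ≤ m) (hb : b + (s + 1) ≤ n),
      0 < (contSub A a b s ha hb).det := by
  intro s
  induction s using Nat.strong_induction_on with
  | _ s IH =>
  intro a b ha hb
  set B := contSub A a b s ha hb with hB
  set x := signAltMinorVec B with hx
  have hx0 : 0 < x 0 := by
    rw [hx, signAltMinorVec]
    simp only [Fin.val_zero, pow_zero, one_mul]
    cases s with
    | zero =>
      rw [show ((B.submatrix Fin.succ (Fin.succAbove 0)).det) = 1 from Matrix.det_fin_zero]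
      norm_num
    | succ t =>
      have heq : B.submatrix Fin.succ ((0 : Fin (t + 2)).succAbove)
          = contSub A (a + 1) (b + 1) t (by omega) (by omega) := by
        ext i j
        rw [Fin.succAbove_zero]
        show B i.succ j.succ = _
        rw [hB]
        show A ⟨a + (i.succ : ℕ), _⟩ ⟨b + (j.succ : ℕ), _⟩ = A ⟨a + 1 + (i:ℕ), _⟩ ⟨b + 1 + (j:ℕ), _⟩
        congr 1 <;> [skip; exact Fin.ext (by simp [Fin.val_succ]; omega)]
        exact Fin.ext (by simp [Fin.val_succ]; omega)
      rw [heq]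
      exact IH t (by omega) (a + 1) (b + 1) _ _
  have hBx : B.mulVec x = fun i => if i = 0 then B.det else 0 := mulVec_signAltMinorVec B
  obtain ⟨h1, h2⟩ := h s a b ha hb
  rw [← hB, ← hx] at h1 h2
  have hdet : B.det ≠ 0 := by
    intro h0
    have hzero : B.mulVec x = 0 := by
      funext i
      rw [hBx]
      simp [h0]
    rw [hzero] at h1
    rw [Splus, if_pos rfl] at h1
    have := sminus_le x
    omega
  have hsplus : Splus (B.mulVec x) = s := by rw [hBx]; exact splus_e0 hdet
  have heq : Splus (B.mulVec x) = Sminus x := by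
    have h3 := sminus_le x
    omega
  obtain ⟨y, hy0, hyagree, hSm, i0, hxi0, hmin, hprod⟩ := h2 heq
  have hi0 : i0 = 0 := by
    by_contra hne
    exact (ne_of_gt hx0) (hmin 0 (Fin.pos_of_ne_zero hne))
  rw [hi0] at hprod
  have hy0pos : 0 < y 0 := by
    rcases mul_pos_iff.mp hprod with ⟨hy, -⟩ | ⟨-, hx'⟩
    · exact hy
    · linarith
  have hyval : y 0 = B.det := by
    have hne : B.mulVec x 0 ≠ 0 := by rw [hBx]; simpa using hdet
    rw [hyagree 0 hne, hBx]
    simp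
  linarith [hyval ▸ hy0pos]



-- strict mono value gap
lemma sm_gap {p M : ℕ} {f : Fin p → Fin M} (hf : StrictMono f) :
    ∀ (k : ℕ) (a b : Fin p), (b : ℕ) = (a : ℕ) + k → (f a : ℕ) + k ≤ f b := by
  intro k
  induction k with
  | zero => intro a b hab; have : a = b := Fin.ext (by omega); subst this; omega
  | succ k IHk =>
    intro a b hab
    have hb : (b : ℕ) = (a : ℕ) + k + 1 := by omega
    have hblt : (a : ℕ) + k < p := by have := b.isLt; omega
    set b' : Fin p := ⟨(a : ℕ) + k, hblt⟩ with hb'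
    have h1 := IHk a b' rfl
    have h2 : f b' < f b := hf (by simp [Fin.lt_def, hb']; omega)
    have := Fin.lt_def.mp h2
    omega

lemma consec_of_range {t M : ℕ} {f : Fin (t + 1) → Fin M} (hf : StrictMono f)
    (hr : (f (Fin.last t) : ℕ) = (f 0 : ℕ) + t) :
    ∀ i : Fin (t + 1), (f i : ℕ) = (f 0 : ℕ) + i := by
  intro i
  have h1 := sm_gap hf (i : ℕ) 0 i (by simp)
  have h2 := sm_gap hf (t - (i : ℕ)) i (Fin.last t) (by simp [Fin.last]; omega)
  omega

lemma gap_exists {t M : ℕ} {f : Fin (t + 2) → Fin M} (hf : StrictMono f)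
    (hgap : (f 0 : ℕ) + (t + 1) < f (Fin.last (t + 1))) :
    ∃ j : Fin (t + 1), (f j.castSucc : ℕ) + 1 < f j.succ := by
  by_contra hc
  push_neg at hc
  have key : ∀ (k : ℕ) (hk : k < t + 2), (f ⟨k, hk⟩ : ℕ) ≤ (f 0 : ℕ) + k := by
    intro k
    induction k with
    | zero => intro hk; simp
    | succ k IHk =>
      intro hk
      have hk' : k < t + 2 := by omega
      have hkk : k < t + 1 := by omega
      have h1 := IHk hk'
      have h2 := hc ⟨k, hkk⟩
      have e1 : (⟨k, hkk⟩ : Fin (t + 1)).castSucc = ⟨k, hk'⟩ := Fin.ext rfl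
      have e2 : (⟨k, hkk⟩ : Fin (t + 1)).succ = ⟨k + 1, hk⟩ := Fin.ext rfl
      rw [e1, e2] at h2
      omega
  have := key (t + 1) (by omega)
  have hlast : (Fin.last (t + 1) : Fin (t + 2)) = ⟨t + 1, by omega⟩ := rfl
  rw [hlast] at hgap
  omega

lemma cramer_mulVec' {k : ℕ} (H : Matrix (Fin k) (Fin k) ℝ) (y : Fin k → ℝ) :
    H.cramer (H.mulVec y) = H.det • y := by
  rw [Matrix.cramer_eq_adjugate_mulVec, Matrix.mulVec_mulVec, Matrix.adjugate_mul,
    Matrix.smul_mulVec, Matrix.one_mulVec]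

lemma neg_one_sq_pow' (k : ℕ) : ((-1 : ℝ)) ^ k * (-1) ^ k = 1 := by
  rw [← pow_add]; exact Even.neg_one_pow ⟨k, by ring⟩

lemma rowStep {t m n N : ℕ} (A : Matrix (Fin m) (Fin n) ℝ)
    (IH : ∀ {p : ℕ} (f : Fin p → Fin m) (g : Fin p → Fin n), StrictMono f → StrictMono g →
        (∀ i j : Fin p, ((f i : ℕ) - (f j : ℕ)) + ((g i : ℕ) - (g j : ℕ)) < N) →
        0 < (A.submatrix f g).det)
    (f : Fin (t + 2) → Fin m) (g : Fin (t + 2) → Fin n)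
    (hf : StrictMono f) (hg : StrictMono g)
    (hμ : ((f (Fin.last (t + 1)) : ℕ) - (f 0 : ℕ)) + ((g (Fin.last (t + 1)) : ℕ) - (g 0 : ℕ)) ≤ N)
    (hgap : (f 0 : ℕ) + (t + 1) < f (Fin.last (t + 1))) :
    0 < (A.submatrix f g).det := by
  obtain ⟨j, hj⟩ := gap_exists hf hgap
  have hq : (f j.castSucc : ℕ) + 1 < m := lt_trans hj (f j.succ).isLt
  set q : Fin m := ⟨(f j.castSucc : ℕ) + 1, hq⟩ with hqdef
  have hjt : (j : ℕ) < t + 1 := j.isLt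
  -- the inserted row function
  set ρ : Fin (t + 3) → Fin m := fun x =>
    if hx : (x : ℕ) ≤ (j : ℕ) then f ⟨(x : ℕ), by omega⟩
    else if hx2 : (x : ℕ) = (j : ℕ) + 1 then q
    else f ⟨(x : ℕ) - 1, by have := x.isLt; omega⟩ with hρdef
  have hρlo : ∀ (x : Fin (t + 3)) (hx : (x : ℕ) ≤ (j : ℕ)),
      ρ x = f ⟨(x : ℕ), by omega⟩ := by
    intro x hx; simp only [hρdef, dif_pos hx]
  have hρmid : ∀ (x : Fin (t + 3)) (hx : (x : ℕ) = (j : ℕ) + 1), ρ x = q := by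
    intro x hx; simp only [hρdef]; rw [dif_neg (by omega), dif_pos hx]
  have hρhi : ∀ (x : Fin (t + 3)) (hx : (j : ℕ) + 2 ≤ (x : ℕ)),
      ρ x = f ⟨(x : ℕ) - 1, by have := x.isLt; omega⟩ := by
    intro x hx; simp only [hρdef]; rw [dif_neg (by omega), dif_neg (by omega)]
  -- strict monotonicity of ρ
  have hρmono : StrictMono ρ := by
    rw [Fin.strictMono_iff_lt_succ]
    intro i
    have hiv : ((i.castSucc : Fin (t + 3)) : ℕ) = (i : ℕ) := rfl
    have hiv2 : ((i.succ : Fin (t + 3)) : ℕ) = (i : ℕ) + 1 := rfl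
    rcases lt_trichotomy (i : ℕ) (j : ℕ) with hlt | heq | hgt
    · rw [hρlo i.castSucc (by omega), hρlo i.succ (by omega)]
      exact hf (by rw [Fin.lt_def]; simp <;> omega)
    · rw [hρlo i.castSucc (by omega), hρmid i.succ (by omega)]
      rw [Fin.lt_def]
      have : f ⟨((i.castSucc : Fin (t+3)) : ℕ), by omega⟩ = f j.castSucc := by
        congr 1; exact Fin.ext (by simp [hiv, heq])
      rw [this]; simp [hqdef]
    · rcases Nat.eq_or_lt_of_le hgt with heq2 | hgt2
      · rw [hρmid i.castSucc (by omega), hρhi i.succ (by omega)]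
        rw [Fin.lt_def]
        have : f ⟨((i.succ : Fin (t+3)) : ℕ) - 1, by omega⟩ = f j.succ := by
          congr 1; exact Fin.ext (by simp [hiv2]; omega)
        rw [this]; simp [hqdef]; omega
      · rw [hρhi i.castSucc (by omega), hρhi i.succ (by omega)]
        exact hf (by rw [Fin.lt_def]; simp only [Fin.val_mk, hiv, hiv2]; omega)
  -- the position of q in ρ
  set k : Fin (t + 3) := (j.succ.castSucc : Fin (t + 3)) with hkdef
  have hkval : (k : ℕ) = (j : ℕ) + 1 := rfl
  have hρcomp : ∀ i : Fin (t + 2), ρ (k.succAbove i) = f i := by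
    intro i
    rcases le_or_gt (i : ℕ) (j : ℕ) with hle | hlt
    · rw [Fin.succAbove_of_castSucc_lt _ _ (by rw [Fin.lt_def]; simpa using by omega)]
      rw [hρlo i.castSucc (by simpa using hle)]
      congr 1 <;> exact Fin.ext (by simp)
    · rw [Fin.succAbove_of_le_castSucc _ _ (by rw [Fin.le_def, hkval]; simp only [Fin.coe_castSucc]; omega)]
      rw [hρhi i.succ (by simp; omega)]
      congr 1 <;> exact Fin.ext (by simp)
  -- the maximal minors
  set D : Fin (t + 3) → ℝ :=
    fun l => (A.submatrix (fun i : Fin (t + 2) => ρ (l.succAbove i)) g).det with hDdef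
  have htarget : D k = (A.submatrix f g).det := by
    simp only [hDdef]
    congr 1
    ext i c
    simp [Matrix.submatrix_apply, hρcomp i]
  -- basic bounds on ρ
  have hρ0 : ρ 0 = f 0 := by
    rw [hρlo 0 (by simp)]
    congr 1 <;> exact Fin.ext (by simp)
  have hρlast : ρ (Fin.last (t + 2)) = f (Fin.last (t + 1)) := by
    rw [hρhi (Fin.last (t + 2)) (by simp [Fin.last]; omega)]
    congr 1 <;> exact Fin.ext (by simp [Fin.last])
  have hb1 : ∀ x : Fin (t + 3), (f 0 : ℕ) ≤ ρ x := by
    intro x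
    have := hρmono.monotone (Fin.zero_le x)
    rw [hρ0] at this
    exact this
  have hb2 : ∀ x : Fin (t + 3), (ρ x : ℕ) ≤ f (Fin.last (t + 1)) := by
    intro x
    have := hρmono.monotone (Fin.le_last x)
    rw [hρlast] at this
    exact this
  have hb3 : ∀ x : Fin (t + 3), 1 ≤ (x : ℕ) → (f 0 : ℕ) < ρ x := by
    intro x hx
    have : ρ 0 < ρ x := hρmono (by rw [Fin.lt_def, Fin.val_zero]; omega)
    rw [hρ0] at this
    exact this
  have hb4 : ∀ x : Fin (t + 3), (x : ℕ) ≤ t + 1 → (ρ x : ℕ) < f (Fin.last (t + 1)) := by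
    intro x hx
    have : ρ x < ρ (Fin.last (t + 2)) := hρmono (by rw [Fin.lt_def]; simp [Fin.last]; omega)
    rw [hρlast] at this
    exact this
  have hgb1 : ∀ c : Fin (t + 2), (g 0 : ℕ) ≤ g c := fun c => hg.monotone (Fin.zero_le c)
  have hgb2 : ∀ c : Fin (t + 2), (g c : ℕ) ≤ g (Fin.last (t + 1)) :=
    fun c => hg.monotone (Fin.le_last c)
  have hfl : (f 0 : ℕ) + (t + 1) < f (Fin.last (t + 1)) := hgap
  -- the dependence relation
  have hdep : ∀ c : Fin (t + 2),
      ∑ l : Fin (t + 3), (-1 : ℝ) ^ (l : ℕ) * D l * A (ρ l) (g c) = 0 := by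
    intro c
    set Bc := A.submatrix ρ (Fin.snoc g (g c)) with hBcdef
    have hdet0 : Bc.det = 0 := by
      apply Matrix.det_zero_of_column_eq (Fin.castSucc_lt_last c).ne
      intro k'
      simp [hBcdef, Matrix.submatrix_apply, Fin.snoc_castSucc, Fin.snoc_last]
    have hexp := Matrix.det_succ_column Bc (Fin.last (t + 2))
    rw [hdet0] at hexp
    have hterm : ∀ i : Fin (t + 3),
        (Bc.submatrix i.succAbove (Fin.last (t + 2)).succAbove).det = D i := by
      intro i
      rw [Fin.succAbove_last]
      simp only [hDdef]
      congr 1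
      ext a b
      simp [hBcdef, Matrix.submatrix_apply, Fin.snoc_castSucc]
    have e := neg_one_sq_pow' t
    have hstep : ∑ l : Fin (t + 3), (-1 : ℝ) ^ (l : ℕ) * D l * A (ρ l) (g c)
        = (-1) ^ t * ∑ l : Fin (t + 3), (-1 : ℝ) ^ ((l : ℕ) + ((Fin.last (t + 2) : Fin (t+3)) : ℕ))
            * Bc l (Fin.last (t + 2))
            * (Bc.submatrix l.succAbove (Fin.last (t + 2)).succAbove).det := by
      rw [Finset.mul_sum]
      refine Finset.sum_congr rfl fun l _ => ?_
      rw [hterm l]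
      have hB : Bc l (Fin.last (t + 2)) = A (ρ l) (g c) := by
        simp [hBcdef, Matrix.submatrix_apply, Fin.snoc_last]
      rw [hB]
      have hlv : ((Fin.last (t + 2) : Fin (t+3)) : ℕ) = t + 2 := rfl
      rw [hlv]
      linear_combination (-((-1 : ℝ) ^ (l : ℕ) * A (ρ l) (g c) * D l)) * e
    rw [hstep, ← hexp, mul_zero]
  -- the linear system
  set γ' : Fin (t + 1) → Fin n := fun c => g c.castSucc with hγdef
  set C : Matrix (Fin (t + 1)) (Fin (t + 1)) ℝ :=
    Matrix.of fun i c => A (ρ i.succ.castSucc) (γ' c) with hCdef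
  set y : Fin (t + 1) → ℝ := fun i => (-1 : ℝ) ^ ((i : ℕ) + 1) * D i.succ.castSucc with hydef
  set u : Fin (t + 1) → ℝ := fun c => A (ρ 0) (γ' c) with hudef
  set w : Fin (t + 1) → ℝ := fun c => A (ρ (Fin.last (t + 2))) (γ' c) with hwdef
  set bb : Fin (t + 1) → ℝ :=
    fun c => -(D 0 * u c) - (-1 : ℝ) ^ t * D (Fin.last (t + 2)) * w c with hbbdef
  have et : ((-1 : ℝ)) ^ (t + 2) = (-1) ^ t := by rw [pow_succ, pow_succ]; ring
  have hsys : Cᵀ.mulVec y = bb := by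
    funext c
    have hd := hdep c.castSucc
    rw [Fin.sum_univ_castSucc, Fin.sum_univ_succ] at hd
    show ∑ i, Cᵀ c i * y i = bb c
    have h1 : ∀ i : Fin (t + 1), Cᵀ c i * y i
        = (-1 : ℝ) ^ (((i.succ.castSucc : Fin (t + 3)) : ℕ)) * D i.succ.castSucc
            * A (ρ i.succ.castSucc) (g c.castSucc) := by
      intro i
      have hv : (((i.succ.castSucc : Fin (t + 3)) : ℕ)) = (i : ℕ) + 1 := rfl
      rw [hv]
      show A (ρ i.succ.castSucc) (γ' c) * ((-1 : ℝ) ^ ((i : ℕ) + 1) * D i.succ.castSucc) = _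
      simp only [hγdef]
      ring
    rw [Finset.sum_congr rfl (fun i _ => h1 i)]
    have h0 : ((((0 : Fin (t + 2)).castSucc : Fin (t + 3))) : ℕ) = 0 := rfl
    have hlast : (((Fin.last (t + 1)).succ : Fin (t + 3)) : ℕ) = t + 2 := rfl
    have hc0 : ((0 : Fin (t + 2)).castSucc : Fin (t + 3)) = 0 := Fin.ext rfl
    have hcl : ((Fin.last (t + 1)).castSucc : Fin (t + 3)) = (Fin.last (t + 1)).castSucc := rfl
    rw [hc0] at hd
    have hl2 : ((Fin.last (t + 2)) : Fin (t + 3)) = (Fin.last (t + 2)) := rfl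
    -- hd : (-1)^(0:ℕ) * D 0 * A (ρ 0) (g c.castSucc) + Σ + (-1)^(t+2) * D last * A (ρ last) .. = 0
    have hv0 : ((0 : Fin (t + 3)) : ℕ) = 0 := rfl
    have hvl : ((Fin.last (t + 2) : Fin (t + 3)) : ℕ) = t + 2 := rfl
    rw [hv0, hvl, pow_zero, et] at hd
    show _ = -(D 0 * u c) - (-1 : ℝ) ^ t * D (Fin.last (t + 2)) * w c
    simp only [hudef, hwdef, hγdef]
    linarith [hd]
  have hkey := cramer_mulVec' Cᵀ y
  rw [hsys] at hkey
  have hkeyj := congrFun hkey j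
  have hbb2 : bb = (-(D 0)) • u + (-((-1 : ℝ) ^ t * D (Fin.last (t + 2)))) • w := by
    funext c
    simp only [hbbdef, Pi.add_apply, Pi.smul_apply, smul_eq_mul]
    ring
  have hsplit : Matrix.cramer Cᵀ bb j
      = -(D 0) * Matrix.cramer Cᵀ u j
        + (-((-1 : ℝ) ^ t * D (Fin.last (t + 2)))) * Matrix.cramer Cᵀ w j := by
    rw [hbb2, map_add, _root_.map_smul, _root_.map_smul]
    simp [smul_eq_mul]
  -- evaluation of cramer at u
  set sortedP : Fin (t + 1) → Fin m := fun i => ρ ((j.succ.succAbove i).castSucc) with hsPdef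
  set P : ℝ := (A.submatrix sortedP γ').det with hPdef
  have hcu : Matrix.cramer Cᵀ u j = (-1 : ℝ) ^ (j : ℕ) * P := by
    rw [Matrix.cramer_apply, Matrix.updateCol_transpose, Matrix.det_transpose]
    have hCu : C.updateRow j u = (A.submatrix sortedP γ').submatrix (⇑(Fin.cycleRange j)) id := by
      ext i c
      rw [Matrix.updateRow_apply]
      simp only [Matrix.submatrix_apply, id_eq]
      by_cases hij : i = j
      · simp only [if_pos hij]
        rw [hij, Fin.cycleRange_self]
        have hs0 : sortedP 0 = ρ 0 := by
          simp only [hsPdef]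
          congr 1
        rw [hs0]
        try rfl
      · simp only [if_neg hij]
        rcases lt_or_gt_of_ne hij with hlt | hgt
        · rw [Fin.cycleRange_of_lt hlt]
          have hval : ((i + 1 : Fin (t + 1)) : ℕ) = (i : ℕ) + 1 :=
            Fin.val_add_one_of_lt (lt_of_lt_of_le hlt (Fin.le_last j))
          have hs1 : sortedP (i + 1) = ρ i.succ.castSucc := by
            simp only [hsPdef]
            congr 1
            rw [Fin.succAbove_of_castSucc_lt _ _
              (by rw [Fin.lt_def]; simp only [Fin.coe_castSucc, Fin.val_succ, hval]
                  have := Fin.lt_def.mp hlt; omega)]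
            all_goals exact Fin.ext (by simp [hval])
          rw [hs1]
          rfl
        · rw [Fin.cycleRange_of_gt hgt]
          have hs2 : sortedP i = ρ i.succ.castSucc := by
            simp only [hsPdef]
            congr 1
            rw [Fin.succAbove_of_le_castSucc _ _
              (by rw [Fin.le_def]; simp only [Fin.coe_castSucc, Fin.val_succ]
                  have := Fin.lt_def.mp hgt; omega)]
            all_goals exact Fin.ext (by simp)
          rw [hs2]
          rfl
    rw [hCu, Matrix.det_permute, Fin.sign_cycleRange]
    rw [← hPdef]
    push_cast
    ring
  -- evaluation of cramer at w
  set σ' : Equiv.Perm (Fin (t + 1)) := Fin.revPerm * (Fin.cycleRange j.rev) * Fin.revPerm with hσdef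
  have hσapp : ∀ x : Fin (t + 1), σ' x = (Fin.cycleRange j.rev (x.rev)).rev := by
    intro x
    simp [hσdef, Equiv.Perm.mul_apply, Fin.revPerm_apply]
  have hσsign : Equiv.Perm.sign σ' = (-1 : ℤˣ) ^ ((j.rev : ℕ)) := by
    rw [hσdef, Equiv.Perm.sign_mul, Equiv.Perm.sign_mul, Fin.sign_cycleRange]
    rw [mul_comm (Equiv.Perm.sign (Fin.revPerm : Equiv.Perm (Fin (t + 1)))) _, mul_assoc,
      Int.units_mul_self, mul_one]
  set sortedQ : Fin (t + 1) → Fin m := fun i => ρ ((j.castSucc.succAbove i).succ) with hsQdef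
  set Q : ℝ := (A.submatrix sortedQ γ').det with hQdef
  have hcw : Matrix.cramer Cᵀ w j = (-1 : ℝ) ^ ((j.rev : ℕ)) * Q := by
    rw [Matrix.cramer_apply, Matrix.updateCol_transpose, Matrix.det_transpose]
    have hCw : C.updateRow j w = (A.submatrix sortedQ γ').submatrix (⇑σ') id := by
      ext i c
      rw [Matrix.updateRow_apply]
      simp only [Matrix.submatrix_apply, id_eq]
      by_cases hij : i = j
      · simp only [if_pos hij]
        rw [hij]
        have hσj : σ' j = Fin.last t := by
          rw [hσapp, Fin.cycleRange_self, Fin.rev_zero]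
        rw [hσj]
        have hsl : sortedQ (Fin.last t) = ρ (Fin.last (t + 2)) := by
          simp only [hsQdef]
          congr 1
          rw [Fin.succAbove_of_le_castSucc _ _
            (by rw [Fin.le_def]; simp [Fin.last]; omega)]
          all_goals exact Fin.ext (by simp [Fin.last])
        rw [hsl]
        try rfl
      · simp only [if_neg hij]
        rcases lt_or_gt_of_ne hij with hlt | hgt
        · have hσi : σ' i = i := by
            rw [hσapp, Fin.cycleRange_of_gt (Fin.rev_lt_rev.mpr hlt), Fin.rev_rev]
          rw [hσi]
          have hs1 : sortedQ i = ρ i.succ.castSucc := by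
            simp only [hsQdef]
            congr 1
            rw [Fin.succAbove_of_castSucc_lt _ _
              (by rw [Fin.lt_def]; simp only [Fin.coe_castSucc]
                  have := Fin.lt_def.mp hlt; omega)]
            all_goals exact Fin.ext (by simp)
          rw [hs1]
          rfl
        · have hrevlt : i.rev < j.rev := Fin.rev_lt_rev.mpr hgt
          have hσi : σ' i = (i.rev + 1).rev := by
            rw [hσapp, Fin.cycleRange_of_lt hrevlt]
          have hvr : ((i.rev + 1 : Fin (t + 1)) : ℕ) = (i.rev : ℕ) + 1 :=
            Fin.val_add_one_of_lt (lt_of_lt_of_le hrevlt (Fin.le_last _))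
          have hval : ((σ' i : Fin (t + 1)) : ℕ) = (i : ℕ) - 1 := by
            rw [hσi, Fin.val_rev, hvr, Fin.val_rev]
            have h5 := i.isLt
            have h6 := Fin.lt_def.mp hgt
            omega
          rw [hσi]
          have hs2 : sortedQ ((i.rev + 1).rev) = ρ i.succ.castSucc := by
            simp only [hsQdef]
            congr 1
            have hval2 : (((i.rev + 1).rev : Fin (t + 1)) : ℕ) = (i : ℕ) - 1 := by
              rw [← hσi]
              exact hval
            rw [Fin.succAbove_of_le_castSucc _ _
              (by rw [Fin.le_def]; simp only [Fin.coe_castSucc, hval2]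
                  have := Fin.lt_def.mp hgt; omega)]
            apply Fin.ext
            simp only [Fin.val_succ, Fin.coe_castSucc, hval2]
            have := Fin.lt_def.mp hgt
            omega
          rw [hs2]
          rfl
    rw [hCw, Matrix.det_permute, hσsign]
    rw [← hQdef]
    push_cast
    ring
  -- positivity of the auxiliary minors
  have hγmono : StrictMono γ' := by
    intro a b hab
    apply hg
    rw [Fin.lt_def]
    simpa using Fin.lt_def.mp hab
  have hγlb : ∀ c : Fin (t + 1), (g 0 : ℕ) ≤ γ' c := fun c => hgb1 c.castSucc
  have hγub : ∀ c : Fin (t + 1), (γ' c : ℕ) ≤ g (Fin.last (t + 1)) := fun c => hgb2 c.castSucc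
  have hP : 0 < P := by
    rw [hPdef]
    apply IH sortedP γ' ?_ hγmono ?_
    · intro a b hab
      apply hρmono
      rw [Fin.lt_def]
      simp only [Fin.coe_castSucc]
      exact Fin.lt_def.mp (Fin.strictMono_succAbove j.succ hab)
    · intro a b
      have h1 := hb1 ((j.succ.succAbove b).castSucc)
      have h2 := hb4 ((j.succ.succAbove a).castSucc)
        (by have := (j.succ.succAbove a).isLt; simp only [Fin.coe_castSucc]; omega)
      have h3 := hγlb b
      have h4 := hγub a
      simp only [hsPdef]
      omega
  have hQ : 0 < Q := by
    rw [hQdef]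
    apply IH sortedQ γ' ?_ hγmono ?_
    · intro a b hab
      apply hρmono
      rw [Fin.lt_def]
      simp only [Fin.val_succ]
      have := Fin.lt_def.mp (Fin.strictMono_succAbove j.castSucc hab)
      omega
    · intro a b
      have h1 := hb3 ((j.castSucc.succAbove b).succ) (by simp)
      have h2 := hb2 ((j.castSucc.succAbove a).succ)
      have h3 := hγlb b
      have h4 := hγub a
      simp only [hsQdef]
      omega
  have hCpos : 0 < C.det := by
    have hCeq : C = A.submatrix (fun i : Fin (t + 1) => ρ i.succ.castSucc) γ' := rfl
    rw [hCeq]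
    apply IH _ γ' ?_ hγmono ?_
    · intro a b hab
      apply hρmono
      rw [Fin.lt_def]
      simp only [Fin.coe_castSucc, Fin.val_succ]
      have := Fin.lt_def.mp hab
      omega
    · intro a b
      have h1 := hb3 (b.succ.castSucc) (by simp)
      have h2 := hb4 (a.succ.castSucc) (by have := a.isLt; simp only [Fin.coe_castSucc, Fin.val_succ]; omega)
      have h3 := hγlb b
      have h4 := hγub a
      omega
  have hD0 : 0 < D 0 := by
    simp only [hDdef]
    apply IH _ g ?_ hg ?_
    · intro a b hab
      apply hρmono
      exact Fin.strictMono_succAbove 0 hab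
    · intro a b
      have h1 := hb3 ((0 : Fin (t + 3)).succAbove b) (by rw [Fin.succAbove_zero]; simp)
      have h2 := hb2 ((0 : Fin (t + 3)).succAbove a)
      have h3 := hgb1 b
      have h4 := hgb2 a
      omega
  have hDlast : 0 < D (Fin.last (t + 2)) := by
    simp only [hDdef]
    apply IH _ g ?_ hg ?_
    · intro a b hab
      apply hρmono
      exact Fin.strictMono_succAbove _ hab
    · intro a b
      have h1 := hb1 ((Fin.last (t + 2)).succAbove b)
      have h2 := hb4 ((Fin.last (t + 2)).succAbove a)
        (by rw [Fin.succAbove_last]; have := a.isLt; simp only [Fin.coe_castSucc]; omega)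
      have h3 := hgb1 b
      have h4 := hgb2 a
      omega
  -- assembly
  have hdetT : Cᵀ.det = C.det := Matrix.det_transpose C
  have hmain : C.det * ((-1 : ℝ) ^ ((j : ℕ) + 1) * D j.succ.castSucc)
      = -(D 0) * ((-1 : ℝ) ^ (j : ℕ) * P)
        + (-((-1 : ℝ) ^ t * D (Fin.last (t + 2)))) * ((-1 : ℝ) ^ ((j.rev : ℕ)) * Q) := by
    have h7 : (Cᵀ.det • y) j = C.det * ((-1 : ℝ) ^ ((j : ℕ) + 1) * D j.succ.castSucc) := by
      simp [Pi.smul_apply, smul_eq_mul, hydef, hdetT]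
    rw [← h7, ← hkeyj, hsplit, hcu, hcw]
  have hrj : (j.rev : ℕ) = t - (j : ℕ) := by rw [Fin.val_rev]; omega
  have e1 := neg_one_sq_pow' (j : ℕ)
  have e2 := neg_one_sq_pow' (t - (j : ℕ))
  have hsplitpow : ((-1 : ℝ)) ^ t = (-1) ^ (j : ℕ) * (-1) ^ (t - (j : ℕ)) := by
    rw [← pow_add]
    congr 1
    omega
  rw [hrj, hsplitpow] at hmain
  have hfinal : D j.succ.castSucc * C.det = D 0 * P + D (Fin.last (t + 2)) * Q := by
    linear_combination (-((-1 : ℝ) ^ (j : ℕ))) * hmain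
      + (D 0 * P + (-1 : ℝ) ^ (t - (j : ℕ)) * ((-1 : ℝ) ^ (t - (j : ℕ)) * (D (Fin.last (t + 2)) * Q))
          - C.det * D j.succ.castSucc) * e1
      + (D (Fin.last (t + 2)) * Q) * e2
  have hnum : 0 < D 0 * P + D (Fin.last (t + 2)) * Q :=
    add_pos (mul_pos hD0 hP) (mul_pos hDlast hQ)
  have hDk : 0 < D j.succ.castSucc := by
    by_contra hle
    push_neg at hle
    have h8 : D j.succ.castSucc * C.det ≤ 0 := mul_nonpos_iff.mpr (Or.inr ⟨hle, hCpos.le⟩)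
    linarith
  rw [← htarget, hkdef]
  exact hDk



theorem fekete_aux : ∀ (N : ℕ) {m n : ℕ} (A : Matrix (Fin m) (Fin n) ℝ)
    (_ : ∀ (s a b : ℕ) (ha : a + (s + 1) ≤ m) (hb : b + (s + 1) ≤ n),
      0 < (contSub A a b s ha hb).det)
    {p : ℕ} (f : Fin p → Fin m) (g : Fin p → Fin n), StrictMono f → StrictMono g →
    (∀ i j : Fin p, ((f i : ℕ) - (f j : ℕ)) + ((g i : ℕ) - (g j : ℕ)) ≤ N) →
    0 < (A.submatrix f g).det := by
  intro N
  induction N using Nat.strong_induction_on with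
  | _ N IHN =>
  intro m n A hsolid p f g hf hg hμ
  have oracle : ∀ {m' n' : ℕ} (A' : Matrix (Fin m') (Fin n') ℝ),
      (∀ (s a b : ℕ) (ha : a + (s + 1) ≤ m') (hb : b + (s + 1) ≤ n'),
        0 < (contSub A' a b s ha hb).det) →
      ∀ {p' : ℕ} (f' : Fin p' → Fin m') (g' : Fin p' → Fin n'), StrictMono f' → StrictMono g' →
      (∀ i j : Fin p', ((f' i : ℕ) - (f' j : ℕ)) + ((g' i : ℕ) - (g' j : ℕ)) < N) →
      0 < (A'.submatrix f' g').det := by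
    intro m' n' A' hsolid' p' f' g' hf' hg' hb
    cases p' with
    | zero =>
      rw [show (A'.submatrix f' g').det = 1 from Matrix.det_fin_zero]
      norm_num
    | succ p'' =>
      have hN0 : 0 < N := lt_of_le_of_lt (Nat.zero_le _) (hb 0 0)
      exact IHN (N - 1) (by omega) A' hsolid' f' g' hf' hg'
        (fun i j => by have := hb i j; omega)
  cases p with
  | zero =>
    rw [show (A.submatrix f g).det = 1 from Matrix.det_fin_zero]
    norm_num
  | succ t =>
  by_cases hrow : (f (Fin.last t) : ℕ) = (f 0 : ℕ) + t
  · by_cases hcol : (g (Fin.last t) : ℕ) = (g 0 : ℕ) + t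
    · -- solid case
      have hfa := consec_of_range hf hrow
      have hga := consec_of_range hg hcol
      have ham : (f 0 : ℕ) + (t + 1) ≤ m := by
        have h1 := (f (Fin.last t)).isLt
        omega
      have hbn : (g 0 : ℕ) + (t + 1) ≤ n := by
        have h1 := (g (Fin.last t)).isLt
        omega
      have hAc : A.submatrix f g = contSub A (f 0) (g 0) t ham hbn := by
        ext i c
        show A (f i) (g c) = A ⟨(f 0 : ℕ) + i, _⟩ ⟨(g 0 : ℕ) + c, _⟩
        congr 1
        · exact Fin.ext (hfa i)
        · exact Fin.ext (hga c)
      rw [hAc]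
      exact hsolid _ _ _ _ _
    · -- column gap: use transpose
      have hle := sm_gap hg t 0 (Fin.last t) (by simp [Fin.last])
      have hcol' : (g 0 : ℕ) + t < g (Fin.last t) := by omega
      cases t with
      | zero => simp [Fin.last] at hcol
      | succ t' =>
        have hsolidT : ∀ (s a b : ℕ) (ha : a + (s + 1) ≤ n) (hb : b + (s + 1) ≤ m),
            0 < (contSub Aᵀ a b s ha hb).det := by
          intro s a b ha hb
          have hTc : contSub Aᵀ a b s ha hb = (contSub A b a s hb ha)ᵀ := rfl
          rw [hTc, Matrix.det_transpose]
          exact hsolid _ _ _ _ _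
        have hres := rowStep Aᵀ
          (fun {p'} f' g' h1 h2 h3 => oracle Aᵀ hsolidT f' g' h1 h2 h3)
          g f hg hf
          (by have := hμ (Fin.last (t' + 1)) 0; omega)
          hcol'
        rw [← Matrix.transpose_submatrix, Matrix.det_transpose] at hres
        exact hres
  · -- row gap
    have hle := sm_gap hf t 0 (Fin.last t) (by simp [Fin.last])
    have hrow' : (f 0 : ℕ) + t < f (Fin.last t) := by omega
    cases t with
    | zero => simp [Fin.last] at hrow
    | succ t' =>
      exact rowStep A
        (fun {p'} f' g' h1 h2 h3 => oracle A hsolid f' g' h1 h2 h3)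
        f g hf hg
        (by have := hμ (Fin.last (t' + 1)) 0; omega)
        hrow'


/-- Suppose that for every contiguous `r×r` submatrix `B` of `A`, the single test vector
`x^B = (B¹¹, -B¹², …)` satisfies `S⁺(B x^B) ≤ S⁻(x^B)`, and moreover if equality holds then
the first component of `B x^B` (or, if it is zero, the sign assigned to it in a maximizing
sign assignment computing `S⁺(B x^B)`) has the same sign as the first nonzero component of
`x^B`. Then `A` is totally positive. -/
theorem stmt13 {m n : ℕ} (A : Matrix (Fin m) (Fin n) ℝ)
    (h : ∀ (s a b : ℕ) (ha : a + (s + 1) ≤ m) (hb : b + (s + 1) ≤ n),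
      Splus ((contSub A a b s ha hb).mulVec (signAltMinorVec (contSub A a b s ha hb)))
        ≤ Sminus (signAltMinorVec (contSub A a b s ha hb))
      ∧ (Splus ((contSub A a b s ha hb).mulVec (signAltMinorVec (contSub A a b s ha hb)))
            = Sminus (signAltMinorVec (contSub A a b s ha hb)) →
          ∃ y : Fin (s + 1) → ℝ,
            (∀ i, y i ≠ 0)
            ∧ (∀ i, (contSub A a b s ha hb).mulVec
                (signAltMinorVec (contSub A a b s ha hb)) i ≠ 0 →
                y i = (contSub A a b s ha hb).mulVec
                  (signAltMinorVec (contSub A a b s ha hb)) i)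
            ∧ Sminus y = Splus ((contSub A a b s ha hb).mulVec
                (signAltMinorVec (contSub A a b s ha hb)))
            ∧ ∃ i0 : Fin (s + 1), signAltMinorVec (contSub A a b s ha hb) i0 ≠ 0
                ∧ (∀ j, j < i0 → signAltMinorVec (contSub A a b s ha hb) j = 0)
                ∧ 0 < y 0 * signAltMinorVec (contSub A a b s ha hb) i0)) :
    ∀ r : ℕ, ∀ (f : Fin r → Fin m) (g : Fin r → Fin n),
      StrictMono f → StrictMono g → 0 < (A.submatrix f g).det := by
  intro r f g hf hg
  cases r with
  | zero =>
    rw [show (A.submatrix f g).det = 1 from Matrix.det_fin_zero]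
    norm_num
  | succ s =>
    refine fekete_aux (((f (Fin.last s) : ℕ) - (f 0 : ℕ)) + ((g (Fin.last s) : ℕ) - (g 0 : ℕ)))
      A (solid_pos A h) f g hf hg ?_
    intro i j
    have h1 := Fin.le_def.mp (hf.monotone (Fin.zero_le i))
    have h2 := Fin.le_def.mp (hf.monotone (Fin.le_last i))
    have h3 := Fin.le_def.mp (hf.monotone (Fin.zero_le j))
    have h4 := Fin.le_def.mp (hf.monotone (Fin.le_last j))
    have h5 := Fin.le_def.mp (hg.monotone (Fin.zero_le i))
    have h6 := Fin.le_def.mp (hg.monotone (Fin.le_last i))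
    have h7 := Fin.le_def.mp (hg.monotone (Fin.zero_le j))
    have h8 := Fin.le_def.mp (hg.monotone (Fin.le_last j))
    omega
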